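/- Let c ∈ H^*(C) be homogeneous, let x ∈ H^*(C) be homogeneous with cx = 0, and let y ∈ H^*(C) be homogeneous. Then in cone(l_{s(c)}) the following exact identity holds: (−q(c,x), s(x))·s(y) − (−q(c,xy), s(xy)) = (Θ(c,x,y), 0) + (−1)^{|c|−1} D(0, q(x,y)), where the right C-action on the cone is componentwise, (u,v)·w = (uw, vw). In particular, the section σ(x) := [(−q(c,x), s(x))] of H^*(cone(l_{s(c)})) → Ann_{H^*(C)}(c) satisfies: σ(x)·y − σ(xy) equals the image of θ(c,x,y) under the map H^*(C) → H^*(cone(l_{s(c)})) induced by the inclusion C → cone(l_{s(c)}). -/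

import Mathlib

/-- `Qmap s q x y` is the cochain `q(x,y) := q(s(x)s(y) - s(xy))`. -/
def Qmap {k C H : Type} [CommRing k] [Ring C] [Algebra k C] [Ring H] [Algebra k H]
    (s : H →ₗ[k] C) (q : C → C) (x y : H) : C :=
  q (s x * s y - s (x * y))

/-- `Theta s q i x y z` is the expression
`Θ(x,y,z) = (-1)^{|x|} s(x) q(y,z) - q(xy,z) + q(x,yz) - q(x,y) s(z)`,
where `i = |x|` is the degree of `x`. -/
def Theta {k C H : Type} [CommRing k] [Ring C] [Algebra k C] [Ring H] [Algebra k H]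
    (s : H →ₗ[k] C) (q : C → C) (i : ℕ) (x y z : H) : C :=
  ((-1 : ℤ) ^ i) • (s x * Qmap s q y z) - Qmap s q (x * y) z
    + Qmap s q x (y * z) - Qmap s q x y * s z

/-- The differential of the mapping cone `cone(l_{s(c)})`, where `m = |c|`:
`D(u,v) = (d u + s(c) v, (-1)^{|c|-1} d v)` (note `(-1)^(m+1) = (-1)^(m-1)`). -/
def Dcone {k C H : Type} [CommRing k] [Ring C] [Algebra k C] [Ring H] [Algebra k H]
    (d : C →ₗ[k] C) (s : H →ₗ[k] C) (c : H) (m : ℕ) (p : C × C) : C × C :=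
  (d p.1 + s c * p.2, ((-1 : ℤ) ^ (m + 1)) • d p.2)

/-- For homogeneous `c, x, y ∈ H^*(C)` with `cx = 0`, one has in `cone(l_{s(c)})` the
exact identity
`(-q(c,x), s(x))·s(y) - (-q(c,xy), s(xy)) = (Θ(c,x,y), 0) + (-1)^{|c|-1} D(0, q(x,y))`;
in particular, for the section `σ(x) = [(-q(c,x), s(x))]` of
`H^*(cone(l_{s(c)})) → Ann(c)`, the element `σ(x)y - σ(xy)` is the image of
`θ(c,x,y)` under the map induced by the inclusion `C → cone(l_{s(c)})`. -/
theorem cone_section_defect (k : Type) [CommRing k]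
    (C : Type) [Ring C] [Algebra k C]
    (𝒜 : ℕ → Submodule k C) [GradedAlgebra 𝒜]
    (d : C →ₗ[k] C)
    (hd2 : ∀ x : C, d (d x) = 0)
    (hddeg : ∀ (i : ℕ), ∀ x ∈ 𝒜 i, d x ∈ 𝒜 (i + 1))
    (hleib : ∀ (i : ℕ), ∀ x ∈ 𝒜 i, ∀ y : C,
      d (x * y) = d x * y + ((-1 : ℤ) ^ i) • (x * d y))
    (H : Type) [Ring H] [Algebra k H]
    (ℋ : ℕ → Submodule k H) [GradedAlgebra ℋ]
    (π : C → H)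
    (hπadd : ∀ x y : C, d x = 0 → d y = 0 → π (x + y) = π x + π y)
    (hπsmul : ∀ (a : k) (x : C), d x = 0 → π (a • x) = a • π x)
    (hπmul : ∀ x y : C, d x = 0 → d y = 0 → π (x * y) = π x * π y)
    (hπone : π 1 = 1)
    (hπdeg : ∀ (i : ℕ), ∀ x ∈ 𝒜 i, d x = 0 → π x ∈ ℋ i)
    (hπker : ∀ x : C, d x = 0 → (π x = 0 ↔ ∃ y : C, d y = x))
    (hπsurj : ∀ h : H, ∃ x : C, d x = 0 ∧ π x = h)
    (s : H →ₗ[k] C)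
    (hs0 : ∀ h : H, d (s h) = 0)
    (hsπ : ∀ h : H, π (s h) = h)
    (hsdeg : ∀ (i : ℕ), ∀ h ∈ ℋ i, s h ∈ 𝒜 i)
    (q : C → C)
    (hqd : ∀ x : C, (∃ y, d y = x) → d (q x) = x)
    (hqadd : ∀ x y : C, (∃ u, d u = x) → (∃ v, d v = y) → q (x + y) = q x + q y)
    (hqsmul : ∀ (a : k) (x : C), (∃ y, d y = x) → q (a • x) = a • q x)
    (hqdeg : ∀ (i : ℕ), ∀ x : C, (∃ y, d y = x) → x ∈ 𝒜 (i + 1) → q x ∈ 𝒜 i)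
    (m : ℕ) (c : H) (hc : c ∈ ℋ m)
    (Hc : Type) [AddCommGroup Hc] [Module k Hc]
    (πc : C × C → Hc)
    (hπcadd : ∀ p r : C × C, Dcone d s c m p = 0 → Dcone d s c m r = 0 →
      πc (p + r) = πc p + πc r)
    (hπcsmul : ∀ (a : k) (p : C × C), Dcone d s c m p = 0 → πc (a • p) = a • πc p)
    (hπcker : ∀ p : C × C, Dcone d s c m p = 0 → (πc p = 0 ↔ ∃ r, Dcone d s c m r = p))
    (hπcsurj : ∀ w : Hc, ∃ p : C × C, Dcone d s c m p = 0 ∧ πc p = w)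
    (ρ : Hc → H → Hc)
    (hρ : ∀ (p : C × C) (y : H), Dcone d s c m p = 0 →
      ρ (πc p) y = πc (p.1 * s y, p.2 * s y))
    :
    ∀ (i j : ℕ) (x y : H), x ∈ ℋ i → y ∈ ℋ j → c * x = 0 →
      (((-(Qmap s q c x)) * s y, s x * s y) - ((-(Qmap s q c (x * y))), s (x * y))
          = ((Theta s q m c x y, 0) : C × C)
            + ((-1 : ℤ) ^ (m + 1)) • Dcone d s c m (0, Qmap s q x y)) ∧
      (ρ (πc (-(Qmap s q c x), s x)) y - πc (-(Qmap s q c (x * y)), s (x * y))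
          = πc (Theta s q m c x y, 0)) := by

  intro i j x y hx hy hcx
  -- basic facts
  have hq0 : q 0 = 0 := by
    have h := hqsmul 0 0 ⟨0, by simp⟩
    simpa using h
  have hdmul : ∀ u v : C, d v = 0 → d (u * v) = d u * v := by
    intro u v hv
    induction u using DirectSum.Decomposition.inductionOn 𝒜 with
    | zero => simp
    | homogeneous w =>
        rw [hleib _ w.1 w.2 v, hv]
        simp
    | add u₁ u₂ h₁ h₂ =>
        rw [add_mul, map_add, map_add, h₁, h₂, add_mul]
  have hπneg : ∀ z : C, d z = 0 → π (-z) = - π z := by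
    intro z hz
    have h := hπsmul (-1) z hz
    simpa using h
  have hdq : ∀ a b : H, d (Qmap s q a b) = s a * s b - s (a * b) := by
    intro a b
    apply hqd
    have hd1 : d (s a * s b - s (a * b)) = 0 := by
      rw [map_sub, hdmul _ _ (hs0 b), hs0, hs0]; simp
    have hπ0 : π (s a * s b - s (a * b)) = 0 := by
      rw [sub_eq_add_neg,
        hπadd _ _ (by rw [hdmul _ _ (hs0 b), hs0]; simp) (by rw [map_neg, hs0, neg_zero]),
        hπmul _ _ (hs0 a) (hs0 b), hπneg _ (hs0 _), hsπ, hsπ, hsπ]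
      simp
    exact (hπker _ hd1).mp hπ0
  have hscx : s (c * x) = 0 := by rw [hcx, map_zero]
  have hcxy : c * (x * y) = 0 := by rw [← mul_assoc, hcx, zero_mul]
  have hQ0 : Qmap s q (c * x) y = 0 := by
    unfold Qmap
    rw [hcx]
    simp [hq0]
  have hdQcx : d (Qmap s q c x) = s c * s x := by
    rw [hdq, hcx, map_zero, sub_zero]
  have hdQcxy : d (Qmap s q c (x * y)) = s c * s (x * y) := by
    rw [hdq, hcxy, map_zero, sub_zero]
  have hdQxy : d (Qmap s q x y) = s x * s y - s (x * y) := hdq x y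
  have hee : ((-1 : ℤ) ^ (m + 1)) * ((-1 : ℤ) ^ (m + 1)) = 1 := by
    rw [← mul_pow]; norm_num
  -- Part 1
  have part1 : (((-(Qmap s q c x)) * s y, s x * s y) : C × C) - ((-(Qmap s q c (x * y))), s (x * y))
      = ((Theta s q m c x y, 0) : C × C)
        + ((-1 : ℤ) ^ (m + 1)) • Dcone d s c m (0, Qmap s q x y) := by
    unfold Theta Dcone
    rw [hQ0]
    rw [Prod.ext_iff]
    constructor
    · simp only [Prod.fst_sub, Prod.fst_add, Prod.smul_fst, map_zero, zero_add, neg_mul, sub_zero]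
      module
    · simp only [Prod.snd_sub, Prod.snd_add, Prod.smul_snd, hdQxy, smul_smul, hee, one_smul,
        zero_add]
  -- closedness facts
  have DconeA0 : Dcone d s c m (-(Qmap s q c x), s x) = 0 := by
    unfold Dcone
    rw [Prod.ext_iff]
    constructor
    · simp [map_neg, hdQcx]
    · simp [hs0]
  have DconeB : Dcone d s c m (-(Qmap s q c (x * y)), s (x * y)) = 0 := by
    unfold Dcone
    rw [Prod.ext_iff]
    constructor
    · simp [map_neg, hdQcxy]
    · simp [hs0]
  have DconeA : Dcone d s c m ((-(Qmap s q c x)) * s y, s x * s y) = 0 := by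
    unfold Dcone
    rw [Prod.ext_iff]
    constructor
    · simp only [hdmul _ _ (hs0 y), map_neg, hdQcx, Prod.fst_zero]
      rw [neg_mul, mul_assoc]
      simp
    · simp [hdmul _ _ (hs0 y), hs0]
  have Dlin_sub : ∀ p r : C × C, Dcone d s c m (p - r) = Dcone d s c m p - Dcone d s c m r := by
    intro p r
    unfold Dcone
    rw [Prod.ext_iff]
    constructor
    · simp [mul_sub]; abel
    · simp [smul_sub]
  have Dlin_add : ∀ p r : C × C, Dcone d s c m (p + r) = Dcone d s c m p + Dcone d s c m r := by
    intro p r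
    unfold Dcone
    rw [Prod.ext_iff]
    constructor
    · simp [mul_add]; abel
    · simp [smul_add]
  have Dlin_smul : ∀ (a : ℤ) (p : C × C), Dcone d s c m (a • p) = a • Dcone d s c m p := by
    intro a p
    unfold Dcone
    simp only [Prod.smul_fst, Prod.smul_snd, Prod.smul_mk, map_zsmul, mul_smul_comm, smul_add]
    rw [Prod.ext_iff]
    exact ⟨rfl, smul_comm _ _ _⟩
  have DD : Dcone d s c m (Dcone d s c m (0, Qmap s q x y)) = 0 := by
    unfold Dcone
    rw [Prod.ext_iff]
    constructor
    · simp only [map_zero, zero_add, map_zsmul, Prod.fst_zero]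
      rw [hleib m (s c) (hsdeg m c hc) (Qmap s q x y), hs0, zero_mul, zero_add,
        mul_smul_comm]
      rw [pow_succ]
      module
    · simp only [map_zsmul, hd2, smul_zero, Prod.snd_zero]
  have hTeq : ((Theta s q m c x y, 0) : C × C)
      = (((-(Qmap s q c x)) * s y, s x * s y) : C × C) - ((-(Qmap s q c (x * y))), s (x * y))
        - ((-1 : ℤ) ^ (m + 1)) • Dcone d s c m (0, Qmap s q x y) := by
    rw [part1]; abel
  have DconeE : Dcone d s c m (((-1 : ℤ) ^ (m + 1)) • Dcone d s c m (0, Qmap s q x y)) = 0 := by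
    rw [Dlin_smul, DD, smul_zero]
  have DconeT : Dcone d s c m ((Theta s q m c x y, 0) : C × C) = 0 := by
    rw [hTeq, Dlin_sub, Dlin_sub, DconeA, DconeB, DconeE]
    simp
  refine ⟨part1, ?_⟩
  -- Part 2
  have hπE : πc (((-1 : ℤ) ^ (m + 1)) • Dcone d s c m (0, Qmap s q x y)) = 0 := by
    refine (hπcker _ DconeE).mpr ⟨((-1 : ℤ) ^ (m + 1)) • (0, Qmap s q x y), ?_⟩
    rw [Dlin_smul]
  have hAeq : (((-(Qmap s q c x)) * s y, s x * s y) : C × C)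
      = ((-(Qmap s q c (x * y))), s (x * y))
        + (((Theta s q m c x y, 0) : C × C)
            + ((-1 : ℤ) ^ (m + 1)) • Dcone d s c m (0, Qmap s q x y)) := by
    rw [← part1]; abel
  have hρA := hρ (-(Qmap s q c x), s x) y DconeA0
  simp only at hρA
  rw [hρA, hAeq,
    hπcadd _ _ DconeB (by rw [Dlin_add, DconeT, DconeE, add_zero]),
    hπcadd _ _ DconeT DconeE, hπE, add_zero]
  abel
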